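/- Let 0 < α < 1/2, let g: [0,1] → ℝ be continuous, and for 0 ≤ u < s ≤ 1 define D₁(s,u) = (c_H/Γ(α)) s^{-α} ∫_u^s r^α g(r) (s-r)^{α-1} (r-u)^{-α} dr. Then lim_{u→s⁻} D₁(s,u) = c_H Γ(1-α) g(s) for each fixed s ∈ (0,1]. -/

import Mathlib

open MeasureTheory Real intervalIntegral Filter

lemma betaInt_integrable {a b : ℝ} (ha : 0 < a) (hb : 0 < b) :
    IntervalIntegrable (fun x : ℝ => x ^ (a - 1) * (1 - x) ^ (b - 1)) volume 0 1 := by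
  have h1 : IntervalIntegrable (fun x : ℝ => x ^ (a - 1)) volume 0 (1/2) :=
    intervalIntegral.intervalIntegrable_rpow' (by linarith)
  have hc1 : ContinuousOn (fun x : ℝ => (1 - x) ^ (b - 1)) (Set.uIcc 0 (1/2)) := by
    intro x hx
    rw [Set.uIcc_of_le (by norm_num)] at hx
    exact ((continuousAt_const.sub continuousAt_id).rpow_const
      (Or.inl (by exact (by linarith [hx.2] : (0:ℝ) < 1 - x).ne'))).continuousWithinAt
  have h1' : IntervalIntegrable (fun x : ℝ => x ^ (a - 1) * (1 - x) ^ (b - 1)) volume 0 (1/2) :=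
    h1.mul_continuousOn hc1
  have h2 : IntervalIntegrable (fun x : ℝ => (1 - x) ^ (b - 1)) volume (1/2) 1 := by
    have := (intervalIntegral.intervalIntegrable_rpow' (r := b - 1) (by linarith)
      (a := 0) (b := 1/2)).comp_sub_left 1
    norm_num at this
    exact this.symm
  have hc2 : ContinuousOn (fun x : ℝ => x ^ (a - 1)) (Set.uIcc (1/2) 1) := by
    intro x hx
    rw [Set.uIcc_of_le (by norm_num)] at hx
    exact (continuousAt_id.rpow_const
      (Or.inl (by simp only [id_eq]; exact (by linarith [hx.1] : (0:ℝ) < x).ne'))).continuousWithinAt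
  have h2' : IntervalIntegrable (fun x : ℝ => x ^ (a - 1) * (1 - x) ^ (b - 1)) volume (1/2) 1 := by
    simpa [mul_comm] using h2.mul_continuousOn hc2
  exact h1'.trans h2'

lemma betaInt_eq {a b : ℝ} (ha : 0 < a) (hb : 0 < b) :
    ∫ x in (0:ℝ)..1, x ^ (a - 1) * (1 - x) ^ (b - 1) =
      Real.Gamma a * Real.Gamma b / Real.Gamma (a + b) := by
  have key := Complex.Gamma_mul_Gamma_eq_betaIntegral (s := (a:ℂ)) (t := (b:ℂ))
    (by simpa using ha) (by simpa using hb)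
  have hbeta : Complex.betaIntegral a b =
      ((∫ x in (0:ℝ)..1, x ^ (a - 1) * (1 - x) ^ (b - 1) : ℝ) : ℂ) := by
    rw [Complex.betaIntegral, ← intervalIntegral.integral_ofReal]
    apply intervalIntegral.integral_congr
    intro x hx
    rw [Set.uIcc_of_le (by norm_num)] at hx
    simp only []
    rw [Complex.ofReal_mul, Complex.ofReal_cpow hx.1, Complex.ofReal_cpow (by linarith [hx.2])]
    push_cast
    ring
  rw [hbeta, ← Complex.ofReal_add, Complex.Gamma_ofReal, Complex.Gamma_ofReal,
    Complex.Gamma_ofReal, ← Complex.ofReal_mul, ← Complex.ofReal_mul] at key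
  have hΓ : Real.Gamma (a + b) ≠ 0 := (Real.Gamma_pos_of_pos (by linarith)).ne'
  have := Complex.ofReal_injective key
  field_simp
  linarith [this]

theorem stmt16 (α cH : ℝ) (hα0 : 0 < α) (hα1 : α < 1 / 2) (hcH : 0 < cH)
    (g : ℝ → ℝ) (hg : ContinuousOn g (Set.Icc (0:ℝ) 1))
    (s : ℝ) (hs : s ∈ Set.Ioc (0:ℝ) 1) :
    Tendsto (fun u : ℝ =>
        (cH / Real.Gamma α) * s ^ (-α) *
          ∫ r in u..s, r ^ α * g r * (s - r) ^ (α - 1) * (r - u) ^ (-α))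
      (nhdsWithin s (Set.Iio s))
      (nhds (cH * Real.Gamma (1 - α) * g s)) := by
  obtain ⟨hs0, hs1⟩ := hs
  have hΓα : 0 < Real.Gamma α := Real.Gamma_pos_of_pos hα0
  obtain ⟨M, hM⟩ := isCompact_Icc.exists_bound_of_continuousOn hg
  set φ : ℝ → ℝ → ℝ := fun u x =>
    ((s - u) * x + u) ^ α * g ((s - u) * x + u) * ((1 - x) ^ (α - 1) * x ^ (-α)) with hφdef
  have hmem : Set.Ioo 0 s ∈ nhdsWithin s (Set.Iio s) :=
    Ioo_mem_nhdsLT_of_mem ⟨hs0, le_refl s⟩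
  -- Step A : change of variables
  have key : ∀ u ∈ Set.Ioo (0:ℝ) s,
      (∫ r in u..s, r ^ α * g r * (s - r) ^ (α - 1) * (r - u) ^ (-α)) =
        ∫ x in Set.Ioo (0:ℝ) 1, φ u x := by
    intro u hu
    have hc : 0 < s - u := by linarith [hu.2]
    have h1 := intervalIntegral.smul_integral_comp_mul_add
      (fun r => r ^ α * g r * (s - r) ^ (α - 1) * (r - u) ^ (-α)) (s - u) u
      (a := 0) (b := 1)
    simp only [mul_zero, zero_add, mul_one, sub_add_cancel] at h1
    rw [← h1, intervalIntegral.integral_of_le (by norm_num : (0:ℝ) ≤ 1),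
      MeasureTheory.integral_Ioc_eq_integral_Ioo, ← MeasureTheory.integral_smul]
    apply MeasureTheory.setIntegral_congr_fun measurableSet_Ioo
    intro x hx
    have hx0 : 0 < x := hx.1
    have hx1 : 0 < 1 - x := by linarith [hx.2]
    have e1 : s - ((s - u) * x + u) = (s - u) * (1 - x) := by ring
    have e2 : (s - u) * x + u - u = (s - u) * x := by ring
    simp only [smul_eq_mul, hφdef, e1, e2]
    rw [Real.mul_rpow hc.le hx1.le, Real.mul_rpow hc.le hx0.le]
    have e3 : (s - u) * ((s - u) ^ (α - 1) * (s - u) ^ (-α)) = 1 := by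
      rw [← Real.rpow_add hc, show (α - 1) + (-α) = -1 by ring, Real.rpow_neg_one,
        mul_inv_cancel₀ hc.ne']
    calc (s - u) * (((s - u) * x + u) ^ α * g ((s - u) * x + u) *
          ((s - u) ^ (α - 1) * (1 - x) ^ (α - 1)) * ((s - u) ^ (-α) * x ^ (-α)))
        = ((s - u) * ((s - u) ^ (α - 1) * (s - u) ^ (-α))) *
          (((s - u) * x + u) ^ α * g ((s - u) * x + u) *
            ((1 - x) ^ (α - 1) * x ^ (-α))) := by ring
      _ = _ := by rw [e3, one_mul]
  -- integrability of the dominating beta kernel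
  have hbeta_int : IntegrableOn (fun x : ℝ => (1 - x) ^ (α - 1) * x ^ (-α))
      (Set.Ioo (0:ℝ) 1) volume := by
    have h := betaInt_integrable (a := 1 - α) (b := α) (by linarith) hα0
    rw [intervalIntegrable_iff, Set.uIoc_of_le (by norm_num : (0:ℝ) ≤ 1)] at h
    have h2 : IntegrableOn (fun x : ℝ => x ^ ((1 - α) - 1) * (1 - x) ^ (α - 1))
        (Set.Ioo (0:ℝ) 1) volume := h.mono_set Set.Ioo_subset_Ioc_self
    have : ((1 - α) - 1) = -α := by ring
    rw [this] at h2
    exact h2.congr_fun (fun x _ => mul_comm _ _) measurableSet_Ioo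
  -- Step B : dominated convergence
  have hDCT : Tendsto (fun u => ∫ x in Set.Ioo (0:ℝ) 1, φ u x) (nhdsWithin s (Set.Iio s))
      (nhds (∫ x in Set.Ioo (0:ℝ) 1,
        s ^ α * g s * ((1 - x) ^ (α - 1) * x ^ (-α)))) := by
    have hbase : ∀ u ∈ Set.Ioo (0:ℝ) s, ∀ x ∈ Set.Ioo (0:ℝ) 1,
        (s - u) * x + u ∈ Set.Icc (0:ℝ) 1 := by
      intro u hu x hx
      have hc : 0 < s - u := by linarith [hu.2]
      constructor
      · nlinarith [hu.1, hx.1]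
      · nlinarith [hx.2, hu.2]
    apply MeasureTheory.tendsto_integral_filter_of_dominated_convergence
      (fun x => M * ((1 - x) ^ (α - 1) * x ^ (-α)))
    · -- a.e. strong measurability
      filter_upwards [hmem] with u hu
      apply ContinuousOn.aestronglyMeasurable _ measurableSet_Ioo
      have hb : ContinuousOn (fun x : ℝ => (s - u) * x + u) (Set.Ioo (0:ℝ) 1) :=
        ((continuous_const.mul continuous_id).add continuous_const).continuousOn
      have hgb : ContinuousOn (fun x : ℝ => g ((s - u) * x + u)) (Set.Ioo (0:ℝ) 1) :=
        hg.comp hb (fun x hx => hbase u hu x hx)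
      have hpow : ContinuousOn (fun x : ℝ => ((s - u) * x + u) ^ α) (Set.Ioo (0:ℝ) 1) := by
        apply ContinuousOn.rpow_const hb
        intro x hx
        exact Or.inr hα0.le
      have h1x : ContinuousOn (fun x : ℝ => (1 - x) ^ (α - 1)) (Set.Ioo (0:ℝ) 1) := by
        apply ContinuousOn.rpow_const (continuous_const.sub continuous_id).continuousOn
        intro x hx
        exact Or.inl (by linarith [hx.2] : (0:ℝ) < 1 - x).ne'
      have hxx : ContinuousOn (fun x : ℝ => x ^ (-α)) (Set.Ioo (0:ℝ) 1) := by
        apply ContinuousOn.rpow_const continuous_id.continuousOn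
        intro x hx
        exact Or.inl hx.1.ne'
      exact (hpow.mul hgb).mul (h1x.mul hxx)
    · -- uniform bound
      filter_upwards [hmem] with u hu
      rw [ae_restrict_iff' measurableSet_Ioo]
      apply Filter.Eventually.of_forall
      intro x hx
      have hb := hbase u hu x hx
      have hker : 0 ≤ (1 - x) ^ (α - 1) * x ^ (-α) :=
        mul_nonneg (Real.rpow_nonneg (by linarith [hx.2]) _) (Real.rpow_nonneg hx.1.le _)
      have h01 : ((s - u) * x + u) ^ α ≤ 1 := Real.rpow_le_one hb.1 hb.2 hα0.le
      have h0 : 0 ≤ ((s - u) * x + u) ^ α := Real.rpow_nonneg hb.1 _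
      have hgM : |g ((s - u) * x + u)| ≤ M := hM _ hb
      have hMge : 0 ≤ M := le_trans (abs_nonneg _) hgM
      calc ‖φ u x‖ = |((s - u) * x + u) ^ α * g ((s - u) * x + u)| *
            ((1 - x) ^ (α - 1) * x ^ (-α)) := by
            rw [Real.norm_eq_abs, hφdef]
            simp only []
            rw [abs_mul, abs_of_nonneg hker]
        _ ≤ (1 * M) * ((1 - x) ^ (α - 1) * x ^ (-α)) := by
            apply mul_le_mul_of_nonneg_right _ hker
            rw [abs_mul, abs_of_nonneg h0]
            exact mul_le_mul h01 hgM (abs_nonneg _) (by norm_num)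
        _ = M * ((1 - x) ^ (α - 1) * x ^ (-α)) := by ring
    · exact hbeta_int.const_mul M
    · -- pointwise convergence
      rw [ae_restrict_iff' measurableSet_Ioo]
      apply Filter.Eventually.of_forall
      intro x hx
      have hb : Tendsto (fun u : ℝ => (s - u) * x + u) (nhdsWithin s (Set.Iio s)) (nhds s) := by
        have : Tendsto (fun u : ℝ => (s - u) * x + u) (nhds s) (nhds ((s - s) * x + s)) :=
          (Continuous.tendsto (by continuity) s)
        simpa using this.mono_left nhdsWithin_le_nhds
      have hb' : Tendsto (fun u : ℝ => (s - u) * x + u) (nhdsWithin s (Set.Iio s))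
          (nhdsWithin s (Set.Icc 0 1)) := by
        apply tendsto_nhdsWithin_of_tendsto_nhds_of_eventually_within _ hb
        filter_upwards [hmem] with u hu
        exact hbase u hu x hx
      have hgt : Tendsto (fun u : ℝ => g ((s - u) * x + u)) (nhdsWithin s (Set.Iio s))
          (nhds (g s)) := (hg s ⟨hs0.le, hs1⟩).tendsto.comp hb'
      have hpt : Tendsto (fun u : ℝ => ((s - u) * x + u) ^ α) (nhdsWithin s (Set.Iio s))
          (nhds (s ^ α)) :=
        ((Real.continuousAt_rpow_const s α (Or.inl hs0.ne')).tendsto).comp hb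
      simp only [hφdef]
      exact ((hpt.mul hgt).mul tendsto_const_nhds)
  -- Step C : value of the limit integral
  have hval : (∫ x in Set.Ioo (0:ℝ) 1, s ^ α * g s * ((1 - x) ^ (α - 1) * x ^ (-α)))
      = s ^ α * g s * (Real.Gamma (1 - α) * Real.Gamma α) := by
    rw [MeasureTheory.integral_const_mul]
    congr 1
    have : (∫ x in Set.Ioo (0:ℝ) 1, (1 - x) ^ (α - 1) * x ^ (-α))
        = ∫ x in (0:ℝ)..1, x ^ ((1 - α) - 1) * (1 - x) ^ (α - 1) := by
      rw [intervalIntegral.integral_of_le (by norm_num : (0:ℝ) ≤ 1),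
        MeasureTheory.integral_Ioc_eq_integral_Ioo]
      apply MeasureTheory.setIntegral_congr_fun measurableSet_Ioo
      intro x hx
      have h : (1 - α) - 1 = -α := by ring
      simp only [h]
      exact (mul_comm _ _)
    rw [this, betaInt_eq (by linarith) hα0]
    have : (1 - α) + α = 1 := by ring
    rw [this, Real.Gamma_one, div_one]
  -- Step D : conclude
  have hfinal : Tendsto (fun u : ℝ =>
      (cH / Real.Gamma α) * s ^ (-α) * ∫ x in Set.Ioo (0:ℝ) 1, φ u x)
      (nhdsWithin s (Set.Iio s)) (nhds (cH * Real.Gamma (1 - α) * g s)) := by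
    have := hDCT.const_mul ((cH / Real.Gamma α) * s ^ (-α))
    rw [hval] at this
    convert this using 2
    have hsm : s ^ (-α) * s ^ α = 1 := by
      rw [← Real.rpow_add hs0]; norm_num
    have expand : (cH / Real.Gamma α * s ^ (-α)) *
        (s ^ α * g s * (Real.Gamma (1 - α) * Real.Gamma α)) =
        (cH / Real.Gamma α * Real.Gamma α) * (s ^ (-α) * s ^ α) *
          (g s * Real.Gamma (1 - α)) := by ring
    rw [expand, hsm, div_mul_cancel₀ _ hΓα.ne']
    ring
  apply hfinal.congr'
  filter_upwards [hmem] with u hu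
  rw [key u hu]
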